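/- Analytic pullback: let n ≥ 2, let φ be a nonzero homogeneous polynomial in n real variables, and let d* be a point of the unit sphere S^{n−1} ⊆ ℝ^n. Then there exist an open set V ⊆ ℝ^{n−1}, a relatively open subset U of S^{n−1} containing d*, and a map Ψ : ℝ^{n−1} → ℝ^n that is real-analytic on V with Ψ(V) = U, such that the composition u ↦ φ(Ψ(u)) is real-analytic on V and not identically zero on V, and the set E := {u ∈ V : φ(Ψ(u)) = 0} has (n−1)-dimensional Lebesgue measure zero. -/

import Mathlib

open MvPolynomial MeasureTheory


/-! Auxiliary lemmas -/

lemma polyNull_pi : ∀ {m : ℕ} (f : MvPolynomial (Fin m) ℝ), f ≠ 0 →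
    (volume : Measure (Fin m → ℝ)) {x | eval x f = 0} = 0 := by
  intro m
  induction m with
  | zero =>
    intro f hf
    obtain ⟨c, rfl⟩ := MvPolynomial.C_surjective (Fin 0) f
    have hc : c ≠ 0 := fun h => hf (by rw [h, map_zero])
    have h2 : {x : Fin 0 → ℝ | eval x (C c) = 0} = ∅ := by
      ext x; simp [hc]
    rw [h2]; simp
  | succ m ih =>
    intro f hf
    set q := MvPolynomial.finSuccEquiv ℝ m f with hqdef
    have hq : q ≠ 0 := by
      intro h
      apply hf
      have := congrArg (MvPolynomial.finSuccEquiv ℝ m).symm (hqdef.symm.trans h)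
      simpa using this
    set S : Set (ℝ × (Fin m → ℝ)) :=
      {z | eval (Fin.cons z.1 z.2 : Fin (m+1) → ℝ) f = 0} with hSdef
    have hScont : Continuous fun z : ℝ × (Fin m → ℝ) =>
        eval (Fin.cons z.1 z.2 : Fin (m+1) → ℝ) f := by
      apply (MvPolynomial.continuous_eval f).comp
      refine continuous_pi fun j => ?_
      refine Fin.cases ?_ ?_ j
      · simpa using continuous_fst
      · intro k; simpa [Function.comp_def] using (continuous_apply k).comp continuous_snd
    have hSm : MeasurableSet S := (isClosed_eq hScont continuous_const).measurableSet
    have hmp := measurePreserving_piFinSuccAbove (fun _ : Fin (m+1) => (volume : Measure ℝ)) 0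
    have hZ : {x : Fin (m+1) → ℝ | eval x f = 0}
        = (MeasurableEquiv.piFinSuccAbove (fun _ => ℝ) 0) ⁻¹' S := by
      ext x
      simp only [Set.mem_setOf_eq, Set.mem_preimage, hSdef,
        MeasurableEquiv.piFinSuccAbove_apply, Fin.insertNthEquiv, Equiv.coe_fn_symm_mk]
      rw [show (Fin.cons (x 0) (Fin.removeNth 0 x) : Fin (m+1) → ℝ) = x by
        rw [Fin.removeNth_zero]; exact Fin.cons_self_tail x]
    rw [volume_pi, hZ, hmp.measure_preimage hSm.nullMeasurableSet]
    rw [show (Measure.pi fun _ : Fin m => (volume : Measure ℝ))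
      = (volume : Measure (Fin m → ℝ)) from (volume_pi).symm]
    rw [Measure.measure_prod_null hSm]
    have hroots : {a : ℝ | Polynomial.eval (MvPolynomial.C a) q = 0}.Finite := by
      have hsub : {a : ℝ | Polynomial.eval (MvPolynomial.C a) q = 0}
          ⊆ (MvPolynomial.C ⁻¹' {z : MvPolynomial (Fin m) ℝ | q.IsRoot z}) := fun a ha => ha
      refine Set.Finite.subset ?_ hsub
      refine Set.Finite.preimage (Set.injOn_of_injective (MvPolynomial.C_injective _ _)) ?_
      exact Polynomial.finite_setOf_isRoot hq
    have hroots0 : (volume : Measure ℝ) {a : ℝ | Polynomial.eval (MvPolynomial.C a) q = 0} = 0 :=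
      hroots.measure_zero _
    rw [Filter.EventuallyEq, ae_iff]
    refine measure_mono_null ?_ hroots0
    intro a ha
    simp only [Set.mem_setOf_eq, Pi.zero_apply] at ha ⊢
    by_contra hqa
    apply ha
    have hsec : (Prod.mk a ⁻¹' S)
        = {y : Fin m → ℝ | eval y (Polynomial.eval (MvPolynomial.C a) q) = 0} := by
      ext y
      simp only [Set.mem_preimage, hSdef, Set.mem_setOf_eq]
      rw [MvPolynomial.eval_eq_eval_mv_eval']
      have hkey : Polynomial.eval a (Polynomial.map (eval y) q)
          = eval y (Polynomial.eval (MvPolynomial.C a) q) := by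
        calc Polynomial.eval a (Polynomial.map (eval y) q)
            = Polynomial.eval₂ (eval y) a q := by rw [Polynomial.eval_map]
          _ = Polynomial.eval₂ (eval y) ((eval y) (MvPolynomial.C a)) q := by
              rw [MvPolynomial.eval_C]
          _ = eval y (Polynomial.eval (MvPolynomial.C a) q) := Polynomial.eval₂_at_apply _ _
      rw [hkey]
    rw [hsec]
    exact ih _ hqa

lemma polyNull_euc {m : ℕ} (f : MvPolynomial (Fin m) ℝ) (hf : f ≠ 0) :
    (volume : Measure (EuclideanSpace ℝ (Fin m))) {x | eval (x : Fin m → ℝ) f = 0} = 0 := by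
  have hmp := EuclideanSpace.volume_preserving_symm_measurableEquiv_toLp (ι := Fin m)
  have hset : {x : EuclideanSpace ℝ (Fin m) | eval (x : Fin m → ℝ) f = 0}
      = (MeasurableEquiv.toLp 2 (Fin m → ℝ)).symm ⁻¹' {x : Fin m → ℝ | eval x f = 0} := rfl
  rw [hset, hmp.measure_preimage]
  · exact polyNull_pi f hf
  · exact ((isClosed_eq (MvPolynomial.continuous_eval f)
      continuous_const).measurableSet).nullMeasurableSet

lemma analyticAt_sqrt {x : ℝ} (hx : 0 < x) : AnalyticAt ℝ Real.sqrt x := by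
  have h1 : AnalyticAt ℝ (fun y : ℝ => ((y : ℂ) ^ (1/2 : ℂ)).re) x := by
    have hc : AnalyticAt ℂ (fun z : ℂ => z ^ (1/2 : ℂ)) (x : ℂ) := by
      apply AnalyticAt.cpow analyticAt_id analyticAt_const
      exact Complex.ofReal_mem_slitPlane.2 hx
    exact (Complex.reCLM.analyticAt _).comp
      ((hc.restrictScalars).comp (Complex.ofRealCLM.analyticAt _))
  apply h1.congr
  filter_upwards [Ioi_mem_nhds hx] with y hy
  have hy0 : (0:ℝ) ≤ y := le_of_lt hy
  have h2 := Complex.ofReal_cpow hy0 (1/2 : ℝ)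
  rw [show ((1/2:ℝ):ℂ) = (1/2:ℂ) by norm_num] at h2
  rw [← h2, Complex.ofReal_re, Real.sqrt_eq_rpow]

lemma eval_smul_homog {m p : ℕ} {φ : MvPolynomial (Fin m) ℝ} (h : φ.IsHomogeneous p)
    (c : ℝ) (x : Fin m → ℝ) : eval (fun j => c * x j) φ = c ^ p * eval x φ := by
  conv_lhs => rw [← φ.support_sum_monomial_coeff]
  conv_rhs => rw [← φ.support_sum_monomial_coeff]
  rw [map_sum, map_sum, Finset.mul_sum]
  apply Finset.sum_congr rfl
  intro d hd
  rw [eval_monomial, eval_monomial]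
  have hw : (d.sum fun _ k => k) = p := by
    have := h (mem_support_iff.1 hd)
    simpa [Finsupp.weight_apply, Finsupp.sum, Pi.one_apply] using this
  have hprod : (d.prod fun i k => (c * x i) ^ k) = c ^ p * d.prod fun i k => (x i) ^ k := by
    rw [Finsupp.prod_congr (g2 := fun i k => c ^ k * (x i) ^ k) (fun i _ => mul_pow c (x i) _)]
    rw [Finsupp.prod, Finsupp.prod, Finset.prod_mul_distrib, Finset.prod_pow_eq_pow_sum]
    rw [show ∑ i ∈ d.support, d i = p from by simpa [Finsupp.sum] using hw]
  rw [hprod]; ring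

lemma euclid_coord_analytic {E : Type*} [NormedAddCommGroup E] [NormedSpace ℝ E]
    {k : ℕ} {f : E → EuclideanSpace ℝ (Fin k)}
    {V : Set E} (h : ∀ j, AnalyticOnNhd ℝ (fun u => f u j) V) :
    AnalyticOnNhd ℝ f V := by
  have hfeq : f = fun u => ∑ j, (f u j) • (EuclideanSpace.single j (1:ℝ)) := by
    funext u
    ext l
    simp [EuclideanSpace.single_apply, Pi.single_apply]
  rw [hfeq]
  intro x hx
  apply Finset.analyticAt_fun_sum
  intro j _
  exact ((h j) x hx).smul analyticAt_const

theorem main_aux (m : ℕ) (p : ℕ) (φ : MvPolynomial (Fin (m + 1)) ℝ)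
    (hφ : φ ≠ 0) (hhom : φ.IsHomogeneous p)
    (dstar : EuclideanSpace ℝ (Fin (m + 1))) (hdstar : ‖dstar‖ = 1) :
    ∃ (V : Set (EuclideanSpace ℝ (Fin m)))
      (U : Set (EuclideanSpace ℝ (Fin (m + 1))))
      (Ψ : EuclideanSpace ℝ (Fin m) → EuclideanSpace ℝ (Fin (m + 1))),
      IsOpen V ∧
      (∃ Ut : Set (EuclideanSpace ℝ (Fin (m + 1))), IsOpen Ut ∧
        U = Ut ∩ {d : EuclideanSpace ℝ (Fin (m + 1)) | ‖d‖ = 1}) ∧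
      dstar ∈ U ∧
      AnalyticOnNhd ℝ Ψ V ∧
      Ψ '' V = U ∧
      AnalyticOnNhd ℝ (fun u => MvPolynomial.eval (Ψ u : Fin (m + 1) → ℝ) φ) V ∧
      ¬ (∀ u ∈ V, MvPolynomial.eval (Ψ u : Fin (m + 1) → ℝ) φ = 0) ∧
      MeasureTheory.volume {u ∈ V | MvPolynomial.eval (Ψ u : Fin (m + 1) → ℝ) φ = 0} = 0 := by
  classical
  -- pick a coordinate where dstar is nonzero
  have hex : ∃ i, dstar i ≠ 0 := by
    by_contra h
    push_neg at h
    have h0 : dstar = 0 := by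
      ext j; exact h j
    rw [h0] at hdstar
    simp at hdstar
  obtain ⟨i, hi⟩ := hex
  set s : ℝ := if 0 < dstar i then 1 else -1 with hsdef
  have hs2 : s * s = 1 := by
    by_cases h : 0 < dstar i <;> simp [hsdef, h]
  have hsd : 0 < s * dstar i := by
    by_cases h : 0 < dstar i
    · simp only [hsdef, if_pos h]; linarith
    · simp only [hsdef, if_neg h]
      have : dstar i < 0 := lt_of_le_of_ne (not_lt.1 h) hi
      linarith
  have habs : ∀ τ z : ℝ, τ * τ = 1 → 0 < τ * z → τ * |z| = z := by
    intro τ z hτ hz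
    rcases mul_self_eq_one_iff.1 hτ with h | h
    · rw [h] at hz ⊢; rw [one_mul] at hz ⊢; exact abs_of_pos hz
    · rw [h] at hz ⊢
      have : z < 0 := by linarith
      rw [abs_of_neg this]; ring
  -- the square root function and domain
  set g : EuclideanSpace ℝ (Fin m) → ℝ := fun u => Real.sqrt (1 - ∑ j, u j ^ 2) with hgdef
  set V : Set (EuclideanSpace ℝ (Fin m)) := Metric.ball 0 1 with hVdef
  have hVmem : ∀ u : EuclideanSpace ℝ (Fin m), u ∈ V ↔ ∑ j, u j ^ 2 < 1 := by
    intro u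
    rw [hVdef, Metric.mem_ball, dist_zero_right, EuclideanSpace.norm_eq]
    rw [show (1:ℝ) = Real.sqrt 1 by simp]
    rw [Real.sqrt_lt_sqrt_iff (by positivity)]
    simp [Real.norm_eq_abs, sq_abs]
  have hnorm1 : ∀ x : EuclideanSpace ℝ (Fin (m+1)), ‖x‖ = 1 ↔ ∑ j, x j ^ 2 = 1 := by
    intro x
    rw [EuclideanSpace.norm_eq]
    simp only [Real.norm_eq_abs, sq_abs]
    constructor
    · intro h
      have h2 := congrArg (fun t : ℝ => t ^ 2) h
      simpa [Real.sq_sqrt (by positivity : (0:ℝ) ≤ ∑ j, x j ^ 2)] using h2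
    · intro h; rw [h]; simp
  -- the parametrizations
  set Ψτ : ℝ → EuclideanSpace ℝ (Fin m) → EuclideanSpace ℝ (Fin (m+1)) :=
    fun τ u => WithLp.toLp 2 (i.insertNth (τ * g u) u : Fin (m+1) → ℝ) with hΨτdef
  set Ut : Set (EuclideanSpace ℝ (Fin (m+1))) := {x | 0 < s * x i} with hUtdef
  have hUtopen : IsOpen Ut := by
    have : Continuous fun x : EuclideanSpace ℝ (Fin (m+1)) => s * x i :=
      continuous_const.mul (EuclideanSpace.proj i).continuous
    exact isOpen_lt continuous_const this
  -- analyticity of g on V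
  have hinner : ∀ x : EuclideanSpace ℝ (Fin m),
      AnalyticAt ℝ (fun u : EuclideanSpace ℝ (Fin m) => 1 - ∑ j, u j ^ 2) x := by
    intro x
    apply AnalyticAt.sub analyticAt_const
    apply Finset.analyticAt_fun_sum
    intro j _
    exact ((EuclideanSpace.proj (𝕜 := ℝ) j).analyticAt x).pow 2
  have hgpos : ∀ u ∈ V, 0 < 1 - ∑ j, u j ^ 2 := by
    intro u hu
    have := (hVmem u).1 hu; linarith
  have hg : AnalyticOnNhd ℝ g V := by
    intro u hu
    exact AnalyticAt.comp (g := Real.sqrt)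
      (f := fun u : EuclideanSpace ℝ (Fin m) => 1 - ∑ j, u j ^ 2)
      (analyticAt_sqrt (hgpos u hu)) (hinner u)
  -- analyticity of the parametrizations
  have hΨa : ∀ τ : ℝ, AnalyticOnNhd ℝ (Ψτ τ) V := by
    intro τ
    apply euclid_coord_analytic
    intro j
    refine Fin.succAboveCases i ?_ ?_ j
    · have heq : (fun u => Ψτ τ u i) = fun u => τ * g u := by
        funext u; exact Fin.insertNth_apply_same (α := fun _ => ℝ) i _ u
      rw [heq]
      intro u hu
      exact analyticAt_const.mul (hg u hu)
    · intro k
      have heq : (fun u : EuclideanSpace ℝ (Fin m) => Ψτ τ u (i.succAbove k))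
          = fun u => u k := by
        funext u; exact Fin.insertNth_apply_succAbove (α := fun _ => ℝ) i _ u k
      rw [heq]
      intro u _
      exact (EuclideanSpace.proj (𝕜 := ℝ) k).analyticAt u
  -- evaluation of φ along the parametrizations is analytic
  have heval : ∀ τ : ℝ,
      AnalyticOnNhd ℝ (fun u => MvPolynomial.eval (Ψτ τ u : Fin (m+1) → ℝ) φ) V := by
    intro τ x hx
    have hcoord : ∀ j, AnalyticAt ℝ (fun u => (Ψτ τ u : Fin (m+1) → ℝ) j) x := by
      intro j
      exact ((EuclideanSpace.proj j).analyticAt _).comp (hΨa τ x hx)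
    have h1 : AnalyticAt ℝ (fun u => MvPolynomial.aeval (Ψτ τ u : Fin (m+1) → ℝ) φ) x :=
      AnalyticAt.aeval_mvPolynomial hcoord φ
    have h2 : (fun u => MvPolynomial.aeval (Ψτ τ u : Fin (m+1) → ℝ) φ)
        = fun u => MvPolynomial.eval (Ψτ τ u : Fin (m+1) → ℝ) φ := by
      funext u
      rw [aeval_eq_eval₂Hom, Algebra.algebraMap_self]; rfl
    rw [← h2]
    exact h1
  -- backward parametrization
  have hback : ∀ τ : ℝ, τ * τ = 1 → ∀ y : EuclideanSpace ℝ (Fin (m+1)), ‖y‖ = 1 →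
      0 < τ * y i → (WithLp.toLp 2 (i.removeNth (y : Fin (m+1) → ℝ)) : EuclideanSpace ℝ (Fin m)) ∈ V ∧
        Ψτ τ (WithLp.toLp 2 (i.removeNth (y : Fin (m+1) → ℝ))) = y := by
    intro τ hτ y hy1 hyi
    have hyi0 : y i ≠ 0 := by
      intro h; rw [h, mul_zero] at hyi; exact lt_irrefl 0 hyi
    have hsum : ∑ j, y j ^ 2 = 1 := (hnorm1 y).1 hy1
    have hsplit : ∑ j, y j ^ 2 = y i ^ 2 + ∑ k, y (i.succAbove k) ^ 2 :=
      Fin.sum_univ_succAbove (fun j => y j ^ 2) i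
    set u : EuclideanSpace ℝ (Fin m) := WithLp.toLp 2 ((i.removeNth (y : Fin (m+1) → ℝ)) : Fin m → ℝ) with hudef
    have husum : ∑ k, u k ^ 2 = 1 - y i ^ 2 := by
      have : ∑ k, u k ^ 2 = ∑ k, y (i.succAbove k) ^ 2 := rfl
      rw [this]; linarith [hsplit, hsum]
    have hyi2 : 0 < y i ^ 2 :=
      lt_of_le_of_ne (sq_nonneg _) (Ne.symm (pow_ne_zero 2 hyi0))
    have huV : u ∈ V := (hVmem u).2 (by rw [husum]; linarith)
    have hgu : g u = |y i| := by
      rw [hgdef]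
      show Real.sqrt (1 - ∑ k, u k ^ 2) = |y i|
      rw [husum, show 1 - (1 - y i ^ 2) = y i ^ 2 by ring]
      exact Real.sqrt_sq_eq_abs _
    refine ⟨huV, ?_⟩
    ext j
    refine Fin.succAboveCases i ?_ ?_ j
    · show (i.insertNth (τ * g u) u : Fin (m+1) → ℝ) i = y i
      rw [Fin.insertNth_apply_same (α := fun _ => ℝ), hgu]
      exact habs τ (y i) hτ hyi
    · intro k
      show (i.insertNth (τ * g u) u : Fin (m+1) → ℝ) (i.succAbove k) = y (i.succAbove k)
      rw [Fin.insertNth_apply_succAbove (α := fun _ => ℝ)]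
      rfl
  -- forward
  have hfwd : ∀ u ∈ V, Ψτ s u ∈ Ut ∩ {d : EuclideanSpace ℝ (Fin (m+1)) | ‖d‖ = 1} := by
    intro u hu
    have hgu2 : (g u) ^ 2 = 1 - ∑ j, u j ^ 2 := Real.sq_sqrt (le_of_lt (hgpos u hu))
    have hΨi : (Ψτ s u : Fin (m+1) → ℝ) i = s * g u :=
      Fin.insertNth_apply_same (α := fun _ => ℝ) i _ u
    have hgu0 : 0 < g u := Real.sqrt_pos.2 (hgpos u hu)
    constructor
    · show 0 < s * (Ψτ s u) i
      rw [hΨi, ← mul_assoc, hs2, one_mul]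
      exact hgu0
    · show ‖Ψτ s u‖ = 1
      rw [hnorm1]
      rw [Fin.sum_univ_succAbove (fun j => (Ψτ s u) j ^ 2) i]
      have h1 : (Ψτ s u) i ^ 2 = 1 - ∑ j, u j ^ 2 := by
        rw [hΨi, show (s * g u) ^ 2 = (s * s) * (g u) ^ 2 by ring, hs2, one_mul, hgu2]
      have h2 : ∀ k, (Ψτ s u) (i.succAbove k) = u k := fun k =>
        Fin.insertNth_apply_succAbove (α := fun _ => ℝ) i _ u k
      rw [h1]
      have h3 : ∑ k, (Ψτ s u) (i.succAbove k) ^ 2 = ∑ k, u k ^ 2 := by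
        apply Finset.sum_congr rfl; intro k _; rw [h2 k]
      rw [h3]; ring
  have himg : Ψτ s '' V = Ut ∩ {d : EuclideanSpace ℝ (Fin (m+1)) | ‖d‖ = 1} := by
    apply Set.Subset.antisymm
    · rintro x ⟨u, hu, rfl⟩; exact hfwd u hu
    · rintro x ⟨hx1, hx2⟩
      obtain ⟨huV, heq⟩ := hback s hs2 x hx2 hx1
      exact ⟨_, huV, heq⟩
  -- eval of φ is analytic on the whole space
  have hevalφ_univ : AnalyticOnNhd ℝ
      (fun x : EuclideanSpace ℝ (Fin (m+1)) => eval (x : Fin (m+1) → ℝ) φ) Set.univ := by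
    intro x _
    have hcoord : ∀ j, AnalyticAt ℝ
        (fun x : EuclideanSpace ℝ (Fin (m+1)) => (x : Fin (m+1) → ℝ) j) x := fun j =>
      (EuclideanSpace.proj (𝕜 := ℝ) j).analyticAt x
    have h1 := AnalyticAt.aeval_mvPolynomial hcoord φ
    have h2 : (fun x : EuclideanSpace ℝ (Fin (m+1)) => aeval (x : Fin (m+1) → ℝ) φ)
        = fun x : EuclideanSpace ℝ (Fin (m+1)) => eval (x : Fin (m+1) → ℝ) φ := by
      funext x; rw [aeval_eq_eval₂Hom, Algebra.algebraMap_self]; rfl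
    rw [← h2]; exact h1
  -- vanishing on the parametrized hemisphere forces φ = 0
  have hvanish : ∀ τ : ℝ, τ * τ = 1 →
      (∀ u ∈ V, eval (Ψτ τ u : Fin (m+1) → ℝ) φ = 0) → False := by
    intro τ hτ hall
    set O : Set (EuclideanSpace ℝ (Fin (m+1))) := {x | 0 < τ * x i} with hOdef
    have hOopen : IsOpen O :=
      isOpen_lt continuous_const (continuous_const.mul (EuclideanSpace.proj (𝕜 := ℝ) i).continuous)
    have hOzero : ∀ x ∈ O, eval (x : Fin (m+1) → ℝ) φ = 0 := by
      intro x hx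
      have hxi : 0 < τ * x i := hx
      have hxi0 : x i ≠ 0 := fun h => by rw [h, mul_zero] at hxi; exact lt_irrefl 0 hxi
      have hx0 : x ≠ 0 := fun h => hxi0 (by rw [h]; rfl)
      have hxn : 0 < ‖x‖ := norm_pos_iff.2 hx0
      set y : EuclideanSpace ℝ (Fin (m+1)) := ‖x‖⁻¹ • x with hydef
      have hy1 : ‖y‖ = 1 := by
        rw [hydef, norm_smul, norm_inv, norm_norm]
        field_simp
      have hyj : ∀ j, y j = ‖x‖⁻¹ * x j := fun j => rfl
      have hyipos : 0 < τ * y i := by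
        rw [hyj i, show τ * (‖x‖⁻¹ * x i) = ‖x‖⁻¹ * (τ * x i) by ring]
        positivity
      obtain ⟨huV, heq⟩ := hback τ hτ y hy1 hyipos
      have hyzero : eval (y : Fin (m+1) → ℝ) φ = 0 := by rw [← heq]; exact hall _ huV
      have hxy : (x : Fin (m+1) → ℝ) = fun j => ‖x‖ * y j := by
        funext j; rw [hyj j]; field_simp
      rw [hxy, eval_smul_homog hhom ‖x‖ (y : Fin (m+1) → ℝ), hyzero, mul_zero]
    have hx₀ : (EuclideanSpace.single i τ : EuclideanSpace ℝ (Fin (m+1))) ∈ O := by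
      show 0 < τ * (EuclideanSpace.single i τ) i
      have hsi : (EuclideanSpace.single i τ : EuclideanSpace ℝ (Fin (m+1))) i = τ := by
        simp [EuclideanSpace.single_apply]
      rw [hsi, hτ]; norm_num
    have hEq := hevalφ_univ.eqOn_zero_of_preconnected_of_eventuallyEq_zero
      isPreconnected_univ (Set.mem_univ _)
      (Filter.eventuallyEq_of_mem (hOopen.mem_nhds hx₀) (fun x hx => hOzero x hx))
    apply hφ
    apply MvPolynomial.funext
    intro x
    have hzz := hEq (Set.mem_univ (WithLp.toLp 2 x : EuclideanSpace ℝ (Fin (m+1))))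
    simpa using hzz
  -- the algebraic decomposition
  set e : Fin (m+1) ≃ Fin (m+1) := (finSuccEquiv' i).trans (_root_.finSuccEquiv m).symm
    with hedef
  have hcomp : ∀ (t : ℝ) (u : Fin m → ℝ),
      (Fin.cons t u : Fin (m+1) → ℝ) ∘ e = i.insertNth t u := by
    intro t u
    funext j
    refine Fin.succAboveCases i ?_ ?_ j
    · show (Fin.cons t u : Fin (m+1) → ℝ) (e i) = _
      rw [show e i = 0 by simp [hedef, finSuccEquiv'_at]]
      rw [Fin.insertNth_apply_same (α := fun _ => ℝ)]
      rfl
    · intro k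
      show (Fin.cons t u : Fin (m+1) → ℝ) (e (i.succAbove k)) = _
      rw [show e (i.succAbove k) = k.succ by
        simp [hedef, finSuccEquiv'_succAbove, finSuccEquiv_symm_some]]
      rw [Fin.insertNth_apply_succAbove (α := fun _ => ℝ)]
      exact Fin.cons_succ (α := fun _ => ℝ) t u k
  set χ : MvPolynomial (Fin (m+1)) ℝ := rename e φ with hχdef
  have hχev : ∀ (t : ℝ) (u : Fin m → ℝ),
      eval (Fin.cons t u : Fin (m+1) → ℝ) χ = eval (i.insertNth t u : Fin (m+1) → ℝ) φ := by
    intro t u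
    rw [hχdef, MvPolynomial.eval_rename, hcomp]
  set q : Polynomial (MvPolynomial (Fin m) ℝ) := MvPolynomial.finSuccEquiv ℝ m χ with hqdef
  set r : MvPolynomial (Fin m) ℝ := 1 - ∑ j, (X j) ^ 2 with hrdef
  have hrev : ∀ u : Fin m → ℝ, eval u r = 1 - ∑ j, u j ^ 2 := by
    intro u; simp [hrdef]
  set w : Polynomial (MvPolynomial (Fin m) ℝ) := Polynomial.X ^ 2 - Polynomial.C r with hwdef
  have hwm : w.Monic := Polynomial.monic_X_pow_sub_C r two_ne_zero
  set ρ : Polynomial (MvPolynomial (Fin m) ℝ) := q %ₘ w with hρdef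
  set a₀ : MvPolynomial (Fin m) ℝ := ρ.coeff 0 with ha₀def
  set a₁ : MvPolynomial (Fin m) ℝ := ρ.coeff 1 with ha₁def
  have hρdeg : ρ.degree ≤ 1 := by
    have h2 : ρ.degree < 2 := by
      rw [show (2 : WithBot ℕ) = w.degree by
        rw [hwdef, Polynomial.degree_X_pow_sub_C (by norm_num : 0 < 2) r]; rfl]
      exact Polynomial.degree_modByMonic_lt q hwm
    rcases le_or_gt ρ.degree 1 with h | h
    · exact h
    · exfalso
      have h3 : (1 : WithBot ℕ) + 1 ≤ ρ.degree := Nat.WithBot.add_one_le_of_lt h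
      rw [show (1 : WithBot ℕ) + 1 = 2 by rfl] at h3
      exact absurd (lt_of_lt_of_le h2 h3) (lt_irrefl _)
  have hρeq : ρ = Polynomial.C a₁ * Polynomial.X + Polynomial.C a₀ :=
    Polynomial.eq_X_add_C_of_degree_le_one hρdeg
  have hkey : ∀ (u : Fin m → ℝ) (t : ℝ), t ^ 2 = 1 - ∑ j, u j ^ 2 →
      eval (i.insertNth t u : Fin (m+1) → ℝ) φ = eval u a₀ + eval u a₁ * t := by
    intro u t ht
    rw [← hχev, MvPolynomial.eval_eq_eval_mv_eval']
    rw [← hqdef]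
    conv_lhs => rw [← Polynomial.modByMonic_add_div q w]
    rw [Polynomial.map_add, Polynomial.map_mul, Polynomial.eval_add, Polynomial.eval_mul]
    have hw0 : Polynomial.eval t (Polynomial.map (eval u) w) = 0 := by
      rw [hwdef, Polynomial.map_sub, Polynomial.map_pow, Polynomial.map_X, Polynomial.map_C]
      rw [Polynomial.eval_sub, Polynomial.eval_pow, Polynomial.eval_X, Polynomial.eval_C]
      rw [hrev u, ht]; ring
    rw [hw0, zero_mul, add_zero, ← hρdef, hρeq]
    rw [Polynomial.map_add, Polynomial.map_mul, Polynomial.map_C, Polynomial.map_X,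
      Polynomial.map_C]
    rw [Polynomial.eval_add, Polynomial.eval_mul, Polynomial.eval_C, Polynomial.eval_X,
      Polynomial.eval_C]
    ring
  set Q : MvPolynomial (Fin m) ℝ := a₀ ^ 2 - r * a₁ ^ 2 with hQdef
  have hQev : ∀ u : Fin m → ℝ,
      eval u Q = (eval u a₀) ^ 2 - (1 - ∑ j, u j ^ 2) * (eval u a₁) ^ 2 := by
    intro u
    rw [hQdef, map_sub, map_pow, map_mul, map_pow, hrev u]
  have hFG : ∀ u ∈ V, eval (Ψτ s u : Fin (m+1) → ℝ) φ * eval (Ψτ (-s) u : Fin (m+1) → ℝ) φ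
      = eval (u : Fin m → ℝ) Q := by
    intro u hu
    have hgu2 : (g u) ^ 2 = 1 - ∑ j, u j ^ 2 := Real.sq_sqrt (le_of_lt (hgpos u hu))
    have ht1 : (s * g u) ^ 2 = 1 - ∑ j, (u : Fin m → ℝ) j ^ 2 := by
      rw [show (s * g u) ^ 2 = (s * s) * (g u) ^ 2 by ring, hs2, one_mul, hgu2]
    have ht2 : ((-s) * g u) ^ 2 = 1 - ∑ j, (u : Fin m → ℝ) j ^ 2 := by
      rw [show ((-s) * g u) ^ 2 = (s * s) * (g u) ^ 2 by ring, hs2, one_mul, hgu2]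
    have h1 := hkey (u : Fin m → ℝ) (s * g u) ht1
    have h2 := hkey (u : Fin m → ℝ) ((-s) * g u) ht2
    rw [show (Ψτ s u : Fin (m+1) → ℝ) = i.insertNth (s * g u) (u : Fin m → ℝ) from rfl]
    rw [show (Ψτ (-s) u : Fin (m+1) → ℝ) = i.insertNth ((-s) * g u) (u : Fin m → ℝ) from rfl]
    rw [h1, h2, hQev]
    have : ((-s) * g u) = -(s * g u) := by ring
    rw [this]
    nlinarith [ht1]
  have hQne : Q ≠ 0 := by
    intro hQ0
    have hzero : ∀ u ∈ V,
        eval (Ψτ s u : Fin (m+1) → ℝ) φ * eval (Ψτ (-s) u : Fin (m+1) → ℝ) φ = 0 := by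
      intro u hu
      rw [hFG u hu, hQ0, map_zero]
    by_cases hF : ∀ u ∈ V, eval (Ψτ s u : Fin (m+1) → ℝ) φ = 0
    · exact hvanish s hs2 hF
    · push_neg at hF
      obtain ⟨u₀, hu₀, hFu₀⟩ := hF
      have hGanal := heval (-s)
      have hFanal := heval s
      have hcont : ContinuousAt (fun u => eval (Ψτ s u : Fin (m+1) → ℝ) φ) u₀ :=
        (hFanal u₀ hu₀).continuousAt
      have hne : ∀ᶠ u in nhds u₀, eval (Ψτ s u : Fin (m+1) → ℝ) φ ≠ 0 :=
        hcont.eventually_ne hFu₀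
      have hVn : V ∈ nhds u₀ := Metric.isOpen_ball.mem_nhds hu₀
      have hGev : (fun u => eval (Ψτ (-s) u : Fin (m+1) → ℝ) φ) =ᶠ[nhds u₀] 0 := by
        filter_upwards [hne, hVn] with u h1 h2
        have := hzero u h2
        exact (mul_eq_zero.1 this).resolve_left h1
      have hEqG := hGanal.eqOn_zero_of_preconnected_of_eventuallyEq_zero
        ((convex_ball (0 : EuclideanSpace ℝ (Fin m)) 1).isPreconnected) hu₀ hGev
      exact hvanish (-s) (by rw [show (-s) * (-s) = s * s by ring, hs2]) fun u hu => hEqG hu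
  -- conclusion
  refine ⟨V, Ut ∩ {d : EuclideanSpace ℝ (Fin (m+1)) | ‖d‖ = 1}, Ψτ s,
    Metric.isOpen_ball, ⟨Ut, hUtopen, rfl⟩, ⟨hsd, hdstar⟩, hΨa s, himg, heval s,
    fun hall => hvanish s hs2 hall, ?_⟩
  refine measure_mono_null ?_ (polyNull_euc Q hQne)
  intro u hu
  obtain ⟨huV, hF⟩ := hu
  show eval (u : Fin m → ℝ) Q = 0
  rw [← hFG u huV, hF, zero_mul]


theorem stmt_13 (n : ℕ) (hn : 2 ≤ n) (p : ℕ) (φ : MvPolynomial (Fin n) ℝ)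
    (hφ : φ ≠ 0) (hhom : φ.IsHomogeneous p)
    (dstar : EuclideanSpace ℝ (Fin n)) (hdstar : ‖dstar‖ = 1) :
    ∃ (V : Set (EuclideanSpace ℝ (Fin (n - 1))))
      (U : Set (EuclideanSpace ℝ (Fin n)))
      (Ψ : EuclideanSpace ℝ (Fin (n - 1)) → EuclideanSpace ℝ (Fin n)),
      IsOpen V ∧
      (∃ Ut : Set (EuclideanSpace ℝ (Fin n)), IsOpen Ut ∧
        U = Ut ∩ {d : EuclideanSpace ℝ (Fin n) | ‖d‖ = 1}) ∧
      dstar ∈ U ∧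
      AnalyticOnNhd ℝ Ψ V ∧
      Ψ '' V = U ∧
      AnalyticOnNhd ℝ (fun u => MvPolynomial.eval (Ψ u : Fin n → ℝ) φ) V ∧
      ¬ (∀ u ∈ V, MvPolynomial.eval (Ψ u : Fin n → ℝ) φ = 0) ∧
      MeasureTheory.volume {u ∈ V | MvPolynomial.eval (Ψ u : Fin n → ℝ) φ = 0} = 0 := by
  obtain ⟨m, rfl⟩ : ∃ m, n = m + 1 := ⟨n - 1, (Nat.succ_pred_eq_of_pos (by omega)).symm⟩
  exact main_aux m p φ hφ hhom dstar hdstar
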